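/- arXiv:1601.06182 — 3 statements merged into one kernel-verified Lean document; each statement's English description precedes it below -/
import Mathlib

section
/- Let n ≥ 1 be a natural number, let f : ℝ × ℝ → ℝ be n times continuously differentiable (ContDiff of order n), and let γ : ℝ → ℝ be n times continuously differentiable. Then the function F : ℝ → ℝ defined by F(s) = ∫_0^{γ(s)} f(s,t) dt (interval integral in t) is n times continuously differentiable on ℝ. -/
open MeasureTheory intervalIntegral

/-- Key lemma: a parametric interval integral over the fixed interval `[0,1]` of a `C^n`
integrand is `C^n`. -/
theorem contDiff_parametric_integral_fixed (n : ℕ) :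
    ∀ g : ℝ × ℝ → ℝ, ContDiff ℝ n g →
      ContDiff ℝ n (fun s => ∫ u in (0:ℝ)..1, g (s, u)) := by
  induction n with
  | zero =>
    intro g hg
    rw [Nat.cast_zero, contDiff_zero]
    exact intervalIntegral.continuous_parametric_intervalIntegral_of_continuous'
      (f := fun s u => g (s, u)) (hg.continuous) 0 1
  | succ n ih =>
    intro g hg
    -- the partial derivative in the first variable
    set g' : ℝ × ℝ → ℝ := fun p => fderiv ℝ g p (1, 0) with hg'def
    have hcast : ((n + 1 : ℕ) : WithTop ℕ∞) = (n : WithTop ℕ∞) + 1 := by push_cast; ring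
    have hgdiff : Differentiable ℝ g := by
      apply hg.differentiable
      rw [hcast]
      simp
    have hg' : ContDiff ℝ n g' := by
      have h1 : ContDiff ℝ n (fderiv ℝ g) := by
        rw [hcast, contDiff_succ_iff_fderiv] at hg
        exact hg.2.2
      exact (ContinuousLinearMap.apply ℝ ℝ ((1:ℝ), (0:ℝ))).contDiff.comp h1
    -- derivative of the parametric integral at each point
    have key : ∀ x₀ : ℝ, HasDerivAt (fun s => ∫ u in (0:ℝ)..1, g (s, u))
        (∫ u in (0:ℝ)..1, g' (x₀, u)) x₀ := by
      intro x₀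
      -- bound g' on a compact set
      obtain ⟨C, hC⟩ : ∃ C, ∀ p ∈ (Set.Icc (x₀ - 1) (x₀ + 1)) ×ˢ (Set.Icc (0:ℝ) 1),
          ‖g' p‖ ≤ C := by
        apply (isCompact_Icc.prod isCompact_Icc).exists_bound_of_continuousOn
        exact (hg'.continuous).continuousOn
      have hderiv : ∀ (x t : ℝ), HasDerivAt (fun x => g (x, t)) (g' (x, t)) x := by
        intro x t
        have h1 : HasFDerivAt g (fderiv ℝ g (x, t)) (x, t) := (hgdiff (x, t)).hasFDerivAt
        have h2 : HasDerivAt (fun x : ℝ => (x, t)) ((1:ℝ), (0:ℝ)) x :=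
          (hasDerivAt_id x).prodMk (hasDerivAt_const x t)
        exact h1.comp_hasDerivAt x h2
      have := intervalIntegral.hasDerivAt_integral_of_dominated_loc_of_deriv_le
        (F := fun x t => g (x, t)) (F' := fun x t => g' (x, t)) (x₀ := x₀)
        (a := (0:ℝ)) (b := 1) (μ := volume) (bound := fun _ => C)
        (s := Metric.ball x₀ 1) (Metric.ball_mem_nhds x₀ one_pos)
        (Filter.Eventually.of_forall fun x =>
          ((hg.continuous.comp (Continuous.prodMk_right x)).aestronglyMeasurable))
        ((hg.continuous.comp (Continuous.prodMk_right x₀)).intervalIntegrable 0 1)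
        ((hg'.continuous.comp (Continuous.prodMk_right x₀)).aestronglyMeasurable)
        ?_ (intervalIntegrable_const) ?_
      · exact this.2
      · refine Filter.Eventually.of_forall fun t ht x hx => ?_
        apply hC
        constructor
        · have := abs_lt.1 (by simpa [Real.dist_eq] using hx)
          constructor <;> linarith [this.1, this.2]
        · rcases Set.mem_uIoc.1 ht with h | h
          · exact ⟨h.1.le, h.2⟩
          · exact ⟨by linarith [h.1, h.2], by linarith [h.1, h.2]⟩
      · exact Filter.Eventually.of_forall fun t _ x _ => hderiv x t
    rw [hcast, contDiff_succ_iff_deriv]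
    refine ⟨fun x => (key x).differentiableAt, by simp, ?_⟩
    have : deriv (fun s => ∫ u in (0:ℝ)..1, g (s, u)) =
        fun x => ∫ u in (0:ℝ)..1, g' (x, u) := by
      funext x; exact (key x).deriv
    rw [this]
    exact ih g' hg'

/-- If `f : ℝ × ℝ → ℝ` and `γ : ℝ → ℝ` are `n` times continuously differentiable, then
`F s = ∫_0^{γ s} f (s, t) dt` is `n` times continuously differentiable. -/
theorem contDiff_parametric_integral_variable_upper_limit
    (n : ℕ) (hn : 1 ≤ n) (f : ℝ × ℝ → ℝ) (hf : ContDiff ℝ n f)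
    (γ : ℝ → ℝ) (hγ : ContDiff ℝ n γ) :
    ContDiff ℝ n (fun s => ∫ t in (0:ℝ)..(γ s), f (s, t)) := by
  have hrw : ∀ s : ℝ, (∫ t in (0:ℝ)..(γ s), f (s, t)) =
      γ s • ∫ u in (0:ℝ)..1, f (s, γ s * u) := by
    intro s
    rw [intervalIntegral.smul_integral_comp_mul_left (fun t => f (s, t)) (γ s)]
    simp
  simp only [hrw]
  have hg : ContDiff ℝ n (fun p : ℝ × ℝ => f (p.1, γ p.1 * p.2)) := by
    apply hf.comp
    exact contDiff_fst.prodMk ((hγ.comp contDiff_fst).mul contDiff_snd)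
  exact hγ.smul (contDiff_parametric_integral_fixed n _ hg)
end

section
/- Let n ≥ 1 be a natural number and let M > 0. Then there exists a constant C depending only on n and M with the following property: for every f : ℝ × ℝ → ℝ that is n times continuously differentiable with ‖iterated derivative of order j of f‖ ≤ M on all of ℝ² for every j ≤ n, and every γ : ℝ → ℝ that is n times continuously differentiable with |γ(s)| ≤ M and |γ^{(j)}(s)| ≤ M for all s ∈ ℝ and all 1 ≤ j ≤ n, the function F(s) = ∫_0^{γ(s)} f(s,t) dt satisfies |F^{(n)}(s)| ≤ C for every s ∈ ℝ. -/
open MeasureTheory intervalIntegral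


-- partial derivative in the first variable, k-th order
noncomputable def pd (k : ℕ) (h : ℝ × ℝ → ℝ) (p : ℝ × ℝ) : ℝ :=
  iteratedFDeriv ℝ k h p (fun _ => ((1, 0) : ℝ × ℝ))

lemma norm_e1 : ‖((1, 0) : ℝ × ℝ)‖ = 1 := by
  simp [Prod.norm_def]

lemma pd_zero (h : ℝ × ℝ → ℝ) (p : ℝ × ℝ) : pd 0 h p = h p := by
  simp [pd]

lemma pd_abs_le (k : ℕ) (h : ℝ × ℝ → ℝ) (p : ℝ × ℝ) :
    |pd k h p| ≤ ‖iteratedFDeriv ℝ k h p‖ := by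
  have := (iteratedFDeriv ℝ k h p).le_opNorm (fun _ => ((1, 0) : ℝ × ℝ))
  simpa [pd, Real.norm_eq_abs, norm_e1] using this

lemma pd_continuous {n k : ℕ} (h : ℝ × ℝ → ℝ) (hh : ContDiff ℝ n h) (hk : k ≤ n) :
    Continuous (pd k h) := by
  have h1 : Continuous (iteratedFDeriv ℝ k h) := hh.continuous_iteratedFDeriv (by exact_mod_cast hk)
  exact (ContinuousMultilinearMap.apply ℝ (fun _ : Fin k => ℝ × ℝ) ℝ
    (fun _ => ((1, 0) : ℝ × ℝ))).continuous.comp h1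

lemma pd_hasDerivAt {n k : ℕ} (h : ℝ × ℝ → ℝ) (hh : ContDiff ℝ n h) (hk : k + 1 ≤ n)
    (s u : ℝ) :
    HasDerivAt (fun s' => pd k h (s', u)) (pd (k + 1) h (s, u)) s := by
  have hG : Differentiable ℝ (iteratedFDeriv ℝ k h) := by
    have := hh.iteratedFDeriv_right (i := k) (m := 1) (by rw [add_comm]; exact_mod_cast hk)
    exact this.differentiable one_ne_zero
  have h1 : HasDerivAt (fun s' : ℝ => ((s', u) : ℝ × ℝ)) ((1 : ℝ), (0 : ℝ)) s :=
    (hasDerivAt_id s).prodMk (hasDerivAt_const s u)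
  have h2 := ((hG (s, u)).hasFDerivAt.comp_hasDerivAt s h1)
  have h3 := ((ContinuousMultilinearMap.apply ℝ (fun _ : Fin k => ℝ × ℝ) ℝ
    (fun _ => ((1, 0) : ℝ × ℝ))).hasFDerivAt.comp_hasDerivAt s h2)
  exact h3

lemma iteratedDeriv_param_integral {n : ℕ} (h : ℝ × ℝ → ℝ) (hh : ContDiff ℝ n h)
    {B : ℝ} (hB : ∀ j ≤ n, ∀ p : ℝ × ℝ, p.2 ∈ Set.uIoc (0:ℝ) 1 → ‖iteratedFDeriv ℝ j h p‖ ≤ B)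
    {k : ℕ} (hk : k ≤ n) (s : ℝ) :
    iteratedDeriv k (fun s' => ∫ u in (0:ℝ)..1, h (s', u)) s
      = ∫ u in (0:ℝ)..1, pd k h (s, u) := by
  induction k generalizing s with
  | zero => simp [pd_zero]
  | succ k IH =>
    rw [iteratedDeriv_succ]
    have heq : iteratedDeriv k (fun s' => ∫ u in (0:ℝ)..1, h (s', u))
        = fun s' => ∫ u in (0:ℝ)..1, pd k h (s', u) :=
      funext fun s' => IH (le_of_lt (Nat.lt_of_succ_le hk)) s'
    rw [heq]
    have key := intervalIntegral.hasDerivAt_integral_of_dominated_loc_of_deriv_le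
      (F := fun x u => pd k h (x, u)) (F' := fun x u => pd (k+1) h (x, u))
      (x₀ := s) (a := (0:ℝ)) (b := 1) (μ := volume) (bound := fun _ => B)
      (s := Set.univ) Filter.univ_mem
      (Filter.Eventually.of_forall fun x =>
        (((pd_continuous h hh (le_of_lt (Nat.lt_of_succ_le hk))).comp
          (continuous_const.prodMk continuous_id)).aestronglyMeasurable))
      (((pd_continuous h hh (le_of_lt (Nat.lt_of_succ_le hk))).comp
          (continuous_const.prodMk continuous_id)).intervalIntegrable _ _)
      (((pd_continuous h hh hk).comp
          (continuous_const.prodMk continuous_id)).aestronglyMeasurable)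
      (Filter.Eventually.of_forall fun u hu x _ =>
        le_trans (pd_abs_le (k+1) h (x, u)) (hB (k+1) hk (x, u) hu))
      intervalIntegrable_const
      (Filter.Eventually.of_forall fun u _ x _ => pd_hasDerivAt h hh hk x u)
    exact key.2.deriv

lemma abs_iteratedDeriv_param_integral_le {n : ℕ} (h : ℝ × ℝ → ℝ) (hh : ContDiff ℝ n h)
    {B : ℝ} (hB : ∀ j ≤ n, ∀ p : ℝ × ℝ, p.2 ∈ Set.uIoc (0:ℝ) 1 → ‖iteratedFDeriv ℝ j h p‖ ≤ B)
    (s : ℝ) :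
    |iteratedDeriv n (fun s' => ∫ u in (0:ℝ)..1, h (s', u)) s| ≤ B := by
  rw [iteratedDeriv_param_integral h hh hB le_rfl s]
  have := intervalIntegral.norm_integral_le_of_norm_le_const
    (a := (0:ℝ)) (b := 1) (C := B) (f := fun u => pd n h (s, u))
    (fun u hu => le_trans (pd_abs_le n h (s, u)) (hB n le_rfl (s, u) hu))
  simpa [Real.norm_eq_abs] using this

-- iterated derivatives of a continuous linear map
lemma clm_iteratedFDeriv_two_le {E F : Type*} [NormedAddCommGroup E] [NormedSpace ℝ E]
    [NormedAddCommGroup F] [NormedSpace ℝ F] (g : E →L[ℝ] F) {i : ℕ} (hi : 2 ≤ i) (x : E) :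
    iteratedFDeriv ℝ i (⇑g) x = 0 := by
  obtain ⟨k, rfl⟩ : ∃ k, i = k + 1 + 1 := ⟨i - 2, by omega⟩
  ext m
  rw [iteratedFDeriv_succ_apply_right]
  have hfd : (fun y : E => fderiv ℝ (⇑g) y) = fun _ => (g : E →L[ℝ] F) :=
    funext fun y => g.fderiv
  rw [hfd, iteratedFDeriv_const_of_ne (Nat.succ_ne_zero k)]
  simp

lemma clm_norm_iteratedFDeriv_one_le {E F : Type*} [NormedAddCommGroup E] [NormedSpace ℝ E]
    [NormedAddCommGroup F] [NormedSpace ℝ F] (g : E →L[ℝ] F) {C : ℝ} (hg : ∀ v, ‖g v‖ ≤ C * ‖v‖)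
    (hC : 0 ≤ C) (x : E) :
    ‖iteratedFDeriv ℝ 1 (⇑g) x‖ ≤ C := by
  refine ContinuousMultilinearMap.opNorm_le_bound hC fun m => ?_
  rw [iteratedFDeriv_one_apply, g.fderiv]
  simpa using hg (m 0)

-- iterated derivative of a pair of functions
lemma iteratedFDeriv_prod_apply {E F G : Type*} [NormedAddCommGroup E] [NormedSpace ℝ E]
    [NormedAddCommGroup F] [NormedSpace ℝ F] [NormedAddCommGroup G] [NormedSpace ℝ G]
    {n i : ℕ} {f₁ : E → F} {f₂ : E → G} (hf₁ : ContDiff ℝ n f₁) (hf₂ : ContDiff ℝ n f₂)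
    (hi : i ≤ n) (x : E) :
    iteratedFDeriv ℝ i (fun x => (f₁ x, f₂ x)) x
      = (iteratedFDeriv ℝ i f₁ x).prod (iteratedFDeriv ℝ i f₂ x) := by
  have h1 := (ContinuousLinearMap.fst ℝ F G).iteratedFDeriv_comp_left (hf₁.prodMk hf₂).contDiffAt (x := x)
    (by exact_mod_cast hi)
  have h2 := (ContinuousLinearMap.snd ℝ F G).iteratedFDeriv_comp_left (hf₁.prodMk hf₂).contDiffAt (x := x)
    (by exact_mod_cast hi)
  have e1 : (⇑(ContinuousLinearMap.fst ℝ F G) ∘ fun x => (f₁ x, f₂ x)) = f₁ := rfl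
  have e2 : (⇑(ContinuousLinearMap.snd ℝ F G) ∘ fun x => (f₁ x, f₂ x)) = f₂ := rfl
  rw [e1] at h1
  rw [e2] at h2
  ext m
  · exact (congrArg (fun φ => φ m) h1).symm
  · exact (congrArg (fun φ => φ m) h2).symm

lemma norm_iteratedFDeriv_prod {E F G : Type*} [NormedAddCommGroup E] [NormedSpace ℝ E]
    [NormedAddCommGroup F] [NormedSpace ℝ F] [NormedAddCommGroup G] [NormedSpace ℝ G]
    {n i : ℕ} {f₁ : E → F} {f₂ : E → G} (hf₁ : ContDiff ℝ n f₁) (hf₂ : ContDiff ℝ n f₂)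
    (hi : i ≤ n) (x : E) :
    ‖iteratedFDeriv ℝ i (fun x => (f₁ x, f₂ x)) x‖
      = max ‖iteratedFDeriv ℝ i f₁ x‖ ‖iteratedFDeriv ℝ i f₂ x‖ := by
  rw [iteratedFDeriv_prod_apply hf₁ hf₂ hi x]
  exact ContinuousMultilinearMap.opNorm_prod _ _

lemma h_bound {n : ℕ} {M : ℝ} (hM : 0 < M) (f : ℝ × ℝ → ℝ) (γ : ℝ → ℝ)
    (hf : ContDiff ℝ n f)
    (hfM : ∀ j : ℕ, j ≤ n → ∀ p : ℝ × ℝ, ‖iteratedFDeriv ℝ j f p‖ ≤ M)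
    (hγ : ContDiff ℝ n γ)
    (hγ0 : ∀ s : ℝ, |γ s| ≤ M)
    (hγM : ∀ j : ℕ, 1 ≤ j → j ≤ n → ∀ s : ℝ, |iteratedDeriv j γ s| ≤ M) :
    ∀ j : ℕ, j ≤ n → ∀ p : ℝ × ℝ, |p.2| ≤ 1 →
      ‖iteratedFDeriv ℝ j (fun q : ℝ × ℝ => γ q.1 * f (q.1, γ q.1 * q.2)) p‖ ≤
        2 ^ n * M * ((n.factorial : ℝ) * M * (2 ^ n * M + 1) ^ n) := by
  set D : ℝ := 2 ^ n * M + 1 with hD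
  have hM0 : (0:ℝ) ≤ M := hM.le
  have h2nM : (0:ℝ) ≤ 2 ^ n * M := by positivity
  have hD1 : (1:ℝ) ≤ D := by simp [hD]; positivity
  -- the first factor
  have hγfst : ContDiff ℝ n (fun q : ℝ × ℝ => γ q.1) := hγ.comp contDiff_fst
  have hA : ∀ i : ℕ, i ≤ n → ∀ p : ℝ × ℝ,
      ‖iteratedFDeriv ℝ i (fun q : ℝ × ℝ => γ q.1) p‖ ≤ M := by
    intro i hi p
    have hcomp := (ContinuousLinearMap.fst ℝ ℝ ℝ).iteratedFDeriv_comp_right hγ p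
      (i := i) (by exact_mod_cast hi)
    have e : (fun q : ℝ × ℝ => γ q.1) = (γ ∘ ⇑(ContinuousLinearMap.fst ℝ ℝ ℝ)) := rfl
    rw [e, hcomp]
    refine le_trans (ContinuousMultilinearMap.norm_compContinuousLinearMap_le _ _) ?_
    have hγi : ‖iteratedFDeriv ℝ i γ (((ContinuousLinearMap.fst ℝ ℝ ℝ)) p)‖ ≤ M := by
      rcases Nat.eq_zero_or_pos i with h0 | h1
      · subst h0; rw [norm_iteratedFDeriv_zero, Real.norm_eq_abs]; exact hγ0 _
      · rw [norm_iteratedFDeriv_eq_norm_iteratedDeriv, Real.norm_eq_abs]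
        exact hγM i h1 hi _
    have hfst : ∏ _j : Fin i, ‖(ContinuousLinearMap.fst ℝ ℝ ℝ)‖ ≤ 1 := by
      refine Finset.prod_le_one (fun _ _ => norm_nonneg _) (fun _ _ => ?_)
      refine ContinuousLinearMap.opNorm_le_bound _ zero_le_one fun v => ?_
      simpa using norm_fst_le v
    calc ‖iteratedFDeriv ℝ i γ (((ContinuousLinearMap.fst ℝ ℝ ℝ)) p)‖ *
          ∏ _j : Fin i, ‖(ContinuousLinearMap.fst ℝ ℝ ℝ)‖
        ≤ M * 1 := by
          apply mul_le_mul hγi hfst (Finset.prod_nonneg fun _ _ => norm_nonneg _) hM0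
      _ = M := mul_one M
  -- fst and snd
  have hFst : ∀ i : ℕ, 1 ≤ i → ∀ p : ℝ × ℝ,
      ‖iteratedFDeriv ℝ i (fun q : ℝ × ℝ => q.1) p‖ ≤ 1 := by
    intro i hi p
    have e : (fun q : ℝ × ℝ => q.1) = ⇑(ContinuousLinearMap.fst ℝ ℝ ℝ) := rfl
    rw [e]
    rcases eq_or_lt_of_le hi with h1 | h2
    · rw [← h1]
      exact clm_norm_iteratedFDeriv_one_le _ (fun v => by simpa using norm_fst_le v)
        zero_le_one p
    · rw [clm_iteratedFDeriv_two_le _ h2 p]; simp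
  have hSnd : ∀ i : ℕ, ∀ p : ℝ × ℝ, |p.2| ≤ 1 →
      ‖iteratedFDeriv ℝ i (fun q : ℝ × ℝ => q.2) p‖ ≤ 1 := by
    intro i p hp
    have e : (fun q : ℝ × ℝ => q.2) = ⇑(ContinuousLinearMap.snd ℝ ℝ ℝ) := rfl
    match i, (Nat.lt_or_ge i 2) with
    | 0, _ => rw [norm_iteratedFDeriv_zero]; simpa [Real.norm_eq_abs] using hp
    | 1, _ =>
      rw [e]
      exact clm_norm_iteratedFDeriv_one_le _ (fun v => by simpa using norm_snd_le v)
        zero_le_one p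
    | (k+2), _ =>
      rw [e, clm_iteratedFDeriv_two_le _ (by omega) p]; simp
  -- the product γ(q.1) * q.2
  have hψc : ContDiff ℝ n (fun q : ℝ × ℝ => γ q.1 * q.2) := hγfst.mul contDiff_snd
  have hψ : ∀ j : ℕ, j ≤ n → ∀ p : ℝ × ℝ, |p.2| ≤ 1 →
      ‖iteratedFDeriv ℝ j (fun q : ℝ × ℝ => γ q.1 * q.2) p‖ ≤ 2 ^ n * M := by
    intro j hj p hp
    have hmul := norm_iteratedFDeriv_mul_le (f := fun q : ℝ × ℝ => γ q.1)
      (g := fun q : ℝ × ℝ => q.2) hγfst contDiff_snd p (n := j) (by exact_mod_cast hj)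
    refine le_trans hmul ?_
    have hterm : ∀ i ∈ Finset.range (j + 1),
        (j.choose i : ℝ) * ‖iteratedFDeriv ℝ i (fun q : ℝ × ℝ => γ q.1) p‖ *
          ‖iteratedFDeriv ℝ (j - i) (fun q : ℝ × ℝ => q.2) p‖ ≤ (j.choose i : ℝ) * M := by
      intro i hi
      have hin : i ≤ n := by have := Finset.mem_range.mp hi; omega
      have ha := hA i hin p
      have hb : ‖iteratedFDeriv ℝ (j - i) (fun q : ℝ × ℝ => q.2) p‖ ≤ 1 := hSnd (j - i) p hp
      calc (j.choose i : ℝ) * ‖iteratedFDeriv ℝ i (fun q : ℝ × ℝ => γ q.1) p‖ *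
            ‖iteratedFDeriv ℝ (j - i) (fun q : ℝ × ℝ => q.2) p‖
          ≤ (j.choose i : ℝ) * M * 1 := by
            apply mul_le_mul (mul_le_mul le_rfl ha (norm_nonneg _) (Nat.cast_nonneg _)) hb
              (norm_nonneg _) (by positivity)
        _ = (j.choose i : ℝ) * M := mul_one _
    refine le_trans (Finset.sum_le_sum hterm) ?_
    have hsum : ∑ i ∈ Finset.range (j + 1), (j.choose i : ℝ) = 2 ^ j := by
      rw [← Nat.cast_sum, Nat.sum_range_choose]; push_cast; ring
    rw [← Finset.sum_mul, hsum]
    have h2j : (2:ℝ) ^ j ≤ 2 ^ n := by gcongr <;> norm_num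
    exact mul_le_mul_of_nonneg_right h2j hM0
  -- the inner map φ
  have hφc : ContDiff ℝ n (fun q : ℝ × ℝ => ((q.1, γ q.1 * q.2) : ℝ × ℝ)) :=
    contDiff_fst.prodMk hψc
  have hφ : ∀ i : ℕ, 1 ≤ i → i ≤ n → ∀ p : ℝ × ℝ, |p.2| ≤ 1 →
      ‖iteratedFDeriv ℝ i (fun q : ℝ × ℝ => ((q.1, γ q.1 * q.2) : ℝ × ℝ)) p‖ ≤ D ^ i := by
    intro i h1 h2 p hp
    rw [norm_iteratedFDeriv_prod contDiff_fst hψc h2 p]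
    have hmax : max ‖iteratedFDeriv ℝ i (fun q : ℝ × ℝ => q.1) p‖
        ‖iteratedFDeriv ℝ i (fun q : ℝ × ℝ => γ q.1 * q.2) p‖ ≤ D :=
      max_le ((hFst i h1 p).trans hD1) ((hψ i h2 p hp).trans (by simp [hD]))
    exact hmax.trans (le_self_pow₀ hD1 (by omega))
  -- the composition f ∘ φ
  have hcompc : ContDiff ℝ n (fun q : ℝ × ℝ => f (q.1, γ q.1 * q.2)) := hf.comp hφc
  have hcomp : ∀ j : ℕ, j ≤ n → ∀ p : ℝ × ℝ, |p.2| ≤ 1 →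
      ‖iteratedFDeriv ℝ j (fun q : ℝ × ℝ => f (q.1, γ q.1 * q.2)) p‖ ≤
        (n.factorial : ℝ) * M * D ^ n := by
    intro j hj p hp
    have hD0 : (0:ℝ) ≤ D := by linarith
    have hle := norm_iteratedFDeriv_comp_le (g := f)
      (f := fun q : ℝ × ℝ => ((q.1, γ q.1 * q.2) : ℝ × ℝ)) hf hφc (by exact_mod_cast hj) p
      (C := M) (D := D) (fun i hi => hfM i (hi.trans hj) _)
      (fun i h1 h2 => hφ i h1 (h2.trans hj) p hp)
    refine le_trans hle ?_
    have h1 : (j.factorial : ℝ) ≤ (n.factorial : ℝ) := by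
      exact_mod_cast Nat.factorial_le hj
    have h2 : D ^ j ≤ D ^ n := pow_le_pow_right₀ hD1 hj
    apply mul_le_mul (mul_le_mul h1 le_rfl hM0 (Nat.cast_nonneg _)) h2 (by positivity)
      (by positivity)
  -- the full product
  intro j hj p hp
  have hmul := norm_iteratedFDeriv_mul_le (f := fun q : ℝ × ℝ => γ q.1)
    (g := fun q : ℝ × ℝ => f (q.1, γ q.1 * q.2)) hγfst hcompc p (n := j)
    (by exact_mod_cast hj)
  refine le_trans hmul ?_
  set Cf : ℝ := (n.factorial : ℝ) * M * D ^ n with hCf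
  have hCf0 : 0 ≤ Cf := by positivity
  have hterm : ∀ i ∈ Finset.range (j + 1),
      (j.choose i : ℝ) * ‖iteratedFDeriv ℝ i (fun q : ℝ × ℝ => γ q.1) p‖ *
        ‖iteratedFDeriv ℝ (j - i) (fun q : ℝ × ℝ => f (q.1, γ q.1 * q.2)) p‖ ≤
        (j.choose i : ℝ) * (M * Cf) := by
    intro i hi
    have hin : i ≤ n := by have := Finset.mem_range.mp hi; omega
    have ha := hA i hin p
    have hb := hcomp (j - i) (by omega) p hp
    calc (j.choose i : ℝ) * ‖iteratedFDeriv ℝ i (fun q : ℝ × ℝ => γ q.1) p‖ *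
          ‖iteratedFDeriv ℝ (j - i) (fun q : ℝ × ℝ => f (q.1, γ q.1 * q.2)) p‖
        ≤ (j.choose i : ℝ) * M * Cf := by
          apply mul_le_mul (mul_le_mul le_rfl ha (norm_nonneg _) (Nat.cast_nonneg _)) hb
            (norm_nonneg _) (by positivity)
      _ = (j.choose i : ℝ) * (M * Cf) := by ring
  refine le_trans (Finset.sum_le_sum hterm) ?_
  have hsum : ∑ i ∈ Finset.range (j + 1), (j.choose i : ℝ) = 2 ^ j := by
    rw [← Nat.cast_sum, Nat.sum_range_choose]; push_cast; ring
  rw [← Finset.sum_mul, hsum]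
  have h2j : (2:ℝ) ^ j ≤ 2 ^ n := by gcongr <;> norm_num
  calc (2:ℝ) ^ j * (M * Cf) ≤ 2 ^ n * (M * Cf) := by
        apply mul_le_mul_of_nonneg_right h2j (by positivity)
    _ = 2 ^ n * M * Cf := by ring

lemma subst_eq (f : ℝ × ℝ → ℝ) (γ : ℝ → ℝ) (s : ℝ) :
    (∫ t in (0:ℝ)..(γ s), f (s, t)) = ∫ u in (0:ℝ)..1, γ s * f (s, γ s * u) := by
  calc (∫ t in (0:ℝ)..(γ s), f (s, t))
      = ∫ x in (γ s * 0)..(γ s * 1), (fun t => f (s, t)) x := by norm_num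
    _ = γ s • ∫ u in (0:ℝ)..1, (fun t => f (s, t)) (γ s * u) :=
        (intervalIntegral.smul_integral_comp_mul_left _ _).symm
    _ = ∫ u in (0:ℝ)..1, γ s * f (s, γ s * u) := by
        rw [← intervalIntegral.integral_smul]
        simp [smul_eq_mul]


/-- Uniform bound on the `n`-th derivative of the partial area function
`F s = ∫_0^{γ s} f (s, t) dt`, given uniform bounds on the derivatives of `f` and `γ`. -/
theorem iteratedDeriv_parametric_integral_bound
    (n : ℕ) (hn : 1 ≤ n) (M : ℝ) (hM : 0 < M) :
    ∃ C : ℝ, ∀ (f : ℝ × ℝ → ℝ) (γ : ℝ → ℝ),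
      ContDiff ℝ n f →
      (∀ j : ℕ, j ≤ n → ∀ p : ℝ × ℝ, ‖iteratedFDeriv ℝ j f p‖ ≤ M) →
      ContDiff ℝ n γ →
      (∀ s : ℝ, |γ s| ≤ M) →
      (∀ j : ℕ, 1 ≤ j → j ≤ n → ∀ s : ℝ, |iteratedDeriv j γ s| ≤ M) →
      ∀ s : ℝ,
        |iteratedDeriv n (fun s' => ∫ t in (0:ℝ)..(γ s'), f (s', t)) s| ≤ C := by
  refine ⟨2 ^ n * M * ((n.factorial : ℝ) * M * (2 ^ n * M + 1) ^ n), ?_⟩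
  intro f γ hf hfM hγ hγ0 hγM s
  have hrw : (fun s' => ∫ t in (0:ℝ)..(γ s'), f (s', t))
      = fun s' => ∫ u in (0:ℝ)..1, (fun q : ℝ × ℝ => γ q.1 * f (q.1, γ q.1 * q.2)) (s', u) :=
    funext fun s' => subst_eq f γ s'
  rw [hrw]
  have hhc : ContDiff ℝ n (fun q : ℝ × ℝ => γ q.1 * f (q.1, γ q.1 * q.2)) :=
    (hγ.comp contDiff_fst).mul
      (hf.comp (contDiff_fst.prodMk ((hγ.comp contDiff_fst).mul contDiff_snd)))
  refine abs_iteratedDeriv_param_integral_le _ hhc (fun j hj p hp => ?_) s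
  have hp2 : |p.2| ≤ 1 := by
    rw [Set.uIoc_of_le (zero_le_one (α := ℝ))] at hp
    exact abs_le.mpr ⟨by linarith [hp.1], hp.2⟩
  exact h_bound hM f γ hf hfM hγ hγ0 hγM j hj p hp2
end

section
/- Let a < b, let γ : ℝ → ℝ be continuously differentiable with γ(s) > 0 for all s ∈ [a,b], and let F₁, F₂ : ℝ² → ℝ be continuously differentiable. Let Q = {(s,t) ∈ ℝ² : a ≤ s ≤ b, 0 ≤ t ≤ γ(s)}. Then ∫_Q (∂F₁/∂x + ∂F₂/∂y) dA = ∫_a^b [F₂(s, γ(s)) − γ'(s) F₁(s, γ(s))] ds − ∫_a^b F₂(s, 0) ds + ∫_0^{γ(b)} F₁(b, t) dt − ∫_0^{γ(a)} F₁(a, t) dt, where dA is two-dimensional Lebesgue measure. -/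
open MeasureTheory intervalIntegral

section AuxDivergence
open Set Metric

set_option maxHeartbeats 1000000

-- slices of continuous functions
lemma slice_cont {F : ℝ × ℝ → ℝ} (hF : Continuous F) (s : ℝ) :
    Continuous fun t => F (s, t) := hF.comp (continuous_const.prodMk continuous_id)

lemma slice_cont' {F : ℝ × ℝ → ℝ} (hF : Continuous F) (t : ℝ) :
    Continuous fun s => F (s, t) := hF.comp (continuous_id.prodMk continuous_const)

-- derivative of s ↦ F (s, t)
lemma hasDerivAt_slice {F : ℝ × ℝ → ℝ} (hF : ContDiff ℝ 1 F) (t x : ℝ) :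
    HasDerivAt (fun s => F (s, t)) (fderiv ℝ F (x, t) (1, 0)) x := by
  have h1 : HasDerivAt (fun s : ℝ => (s, t)) ((1 : ℝ), (0 : ℝ)) x :=
    (hasDerivAt_id x).prodMk (hasDerivAt_const x t)
  exact ((hF.differentiable one_ne_zero (x, t)).hasFDerivAt.comp_hasDerivAt x h1)

lemma hasDerivAt_slice₂ {F : ℝ × ℝ → ℝ} (hF : ContDiff ℝ 1 F) (s y : ℝ) :
    HasDerivAt (fun t => F (s, t)) (fderiv ℝ F (s, y) (0, 1)) y := by
  have h1 : HasDerivAt (fun t : ℝ => (s, t)) ((0 : ℝ), (1 : ℝ)) y :=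
    (hasDerivAt_const y s).prodMk (hasDerivAt_id y)
  exact ((hF.differentiable one_ne_zero (s, y)).hasFDerivAt.comp_hasDerivAt y h1)

lemma cont_pderiv₁ {F : ℝ × ℝ → ℝ} (hF : ContDiff ℝ 1 F) :
    Continuous fun p => fderiv ℝ F p (1, 0) :=
  (hF.continuous_fderiv one_ne_zero).clm_apply continuous_const

lemma key_hasDerivAt (γ : ℝ → ℝ) (hγ : ContDiff ℝ 1 γ)
    (F₁ : ℝ × ℝ → ℝ) (hF₁ : ContDiff ℝ 1 F₁) (s₀ : ℝ) :
    HasDerivAt (fun s => ∫ t in (0:ℝ)..γ s, F₁ (s, t))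
      (deriv γ s₀ * F₁ (s₀, γ s₀) + ∫ t in (0:ℝ)..γ s₀, fderiv ℝ F₁ (s₀, t) (1, 0)) s₀ := by
  have hF₁c : Continuous F₁ := hF₁.continuous
  have hγc : Continuous γ := hγ.continuous
  set c := γ s₀ with hc
  -- A part : fixed bounds, parameter derivative
  have hA : HasDerivAt (fun s => ∫ t in (0:ℝ)..c, F₁ (s, t))
      (∫ t in (0:ℝ)..c, fderiv ℝ F₁ (s₀, t) (1, 0)) s₀ := by
    -- bound for the derivative on a compact neighborhood
    obtain ⟨C, hC⟩ := (isCompact_Icc.prod isCompact_uIcc :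
        IsCompact (Icc (s₀ - 1) (s₀ + 1) ×ˢ uIcc (0:ℝ) c)).exists_bound_of_continuousOn
      (cont_pderiv₁ hF₁).continuousOn
    refine (intervalIntegral.hasDerivAt_integral_of_dominated_loc_of_deriv_le
      (F := fun x t => F₁ (x, t)) (F' := fun x t => fderiv ℝ F₁ (x, t) (1, 0))
      (bound := fun _ => C) (Metric.ball_mem_nhds s₀ one_pos) ?_ ?_ ?_ ?_ ?_ ?_).2
    · exact Filter.Eventually.of_forall fun x => (slice_cont hF₁c x).aestronglyMeasurable
    · exact (slice_cont hF₁c s₀).intervalIntegrable _ _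
    · exact ((cont_pderiv₁ hF₁).comp (continuous_const.prodMk continuous_id)).aestronglyMeasurable
    · refine Filter.Eventually.of_forall fun t ht x hx => hC _ ⟨?_, uIoc_subset_uIcc ht⟩
      rw [Real.ball_eq_Ioo] at hx
      exact ⟨hx.1.le, hx.2.le⟩
    · exact intervalIntegrable_const
    · exact Filter.Eventually.of_forall fun t _ x _ => hasDerivAt_slice hF₁ t x
  -- K part : moving endpoint, frozen parameter
  have hKγ : HasDerivAt (fun s => ∫ t in c..γ s, F₁ (s₀, t)) (F₁ (s₀, c) * deriv γ s₀) s₀ := by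
    have hK : HasDerivAt (fun y => ∫ t in c..y, F₁ (s₀, t)) (F₁ (s₀, c)) c :=
      intervalIntegral.integral_hasDerivAt_right
        ((slice_cont hF₁c s₀).intervalIntegrable _ _)
        ((slice_cont hF₁c s₀).stronglyMeasurableAtFilter _ _)
        (slice_cont hF₁c s₀).continuousAt
    have hγd : HasDerivAt γ (deriv γ s₀) s₀ :=
      (hγ.differentiable one_ne_zero s₀).hasDerivAt
    exact hK.comp s₀ hγd
  -- R part : the o(s - s₀) remainder
  have hR : HasDerivAt (fun s => ∫ t in c..γ s, (F₁ (s, t) - F₁ (s₀, t))) 0 s₀ := by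
    obtain ⟨C, hC⟩ := (isCompact_closedBall ((s₀ : ℝ), c) 1).exists_bound_of_continuousOn
      (hF₁.continuous_fderiv one_ne_zero).continuousOn
    have hC0 : 0 ≤ C := le_trans (norm_nonneg _) (hC (s₀, c) (mem_closedBall_self zero_le_one))
    rw [hasDerivAt_iff_isLittleO]
    simp only [smul_eq_mul, mul_zero, sub_zero, hc, intervalIntegral.integral_same, sub_zero]
    rw [Asymptotics.isLittleO_iff]
    intro ε hε
    have h1 : ∀ᶠ s in nhds s₀, |s - s₀| ≤ 1 := by
      filter_upwards [Metric.closedBall_mem_nhds s₀ one_pos] with s hs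
      simpa [Real.dist_eq] using hs
    have h2 : ∀ᶠ s in nhds s₀, |γ s - c| ≤ min 1 (ε / (C + 1)) := by
      have : Filter.Tendsto γ (nhds s₀) (nhds c) := hγc.continuousAt
      filter_upwards [this (Metric.closedBall_mem_nhds c
        (show (0:ℝ) < min 1 (ε / (C + 1)) from
          lt_min one_pos (div_pos hε (by linarith))))] with s hs
      rwa [Set.mem_preimage, mem_closedBall, Real.dist_eq] at hs
    filter_upwards [h1, h2] with s hs1 hs2
    -- Lipschitz bound on the slice difference
    have hlip : ∀ t ∈ Set.uIoc c (γ s), ‖F₁ (s, t) - F₁ (s₀, t)‖ ≤ C * |s - s₀| := by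
      intro t ht
      have ht' : |t - c| ≤ |γ s - c| := by
        have hmem' : t ∈ Set.uIcc c (γ s) := Set.uIoc_subset_uIcc ht
        rw [abs_sub_le_iff]
        rcases le_total c (γ s) with h | h
        · rw [Set.uIcc_of_le h, Set.mem_Icc] at hmem'
          constructor <;>
            linarith [le_abs_self (γ s - c), neg_abs_le (γ s - c), abs_nonneg (γ s - c)]
        · rw [Set.uIcc_of_ge h, Set.mem_Icc] at hmem'
          constructor <;>
            linarith [le_abs_self (γ s - c), neg_abs_le (γ s - c), abs_nonneg (γ s - c)]
      have hmem : ∀ x : ℝ, |x - s₀| ≤ 1 → ((x, t) : ℝ × ℝ) ∈ closedBall ((s₀ : ℝ), c) 1 := by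
        intro x hx
        rw [mem_closedBall, Prod.dist_eq, Real.dist_eq, Real.dist_eq]
        exact max_le hx (le_trans ht' (le_trans hs2 (min_le_left _ _)))
      have := (convex_closedBall ((s₀ : ℝ), c) 1).norm_image_sub_le_of_norm_fderiv_le
        (f := F₁) (fun x _ => hF₁.differentiable one_ne_zero x) hC
        (hmem s₀ (by simp)) (hmem s hs1)
      calc ‖F₁ (s, t) - F₁ (s₀, t)‖ ≤ C * ‖((s, t) : ℝ × ℝ) - (s₀, t)‖ := this
        _ = C * |s - s₀| := by
            rw [Prod.norm_def]; simp [Real.norm_eq_abs]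
    calc ‖∫ t in c..γ s, (F₁ (s, t) - F₁ (s₀, t))‖
        ≤ C * |s - s₀| * |γ s - c| :=
          intervalIntegral.norm_integral_le_of_norm_le_const hlip
      _ ≤ C * |s - s₀| * (ε / (C + 1)) := by
          refine mul_le_mul_of_nonneg_left (le_trans hs2 (min_le_right _ _)) ?_
          positivity
      _ ≤ ε * ‖s - s₀‖ := by
          rw [Real.norm_eq_abs]
          rw [div_eq_mul_inv]
          have h3 : C * (C + 1)⁻¹ ≤ 1 := by
            rw [mul_inv_le_iff₀ (by linarith)]; linarith
          nlinarith [abs_nonneg (s - s₀), mul_le_mul_of_nonneg_right h3 (mul_nonneg hε.le (abs_nonneg (s - s₀)))]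
  -- assemble
  have hB : HasDerivAt (fun s => ∫ t in c..γ s, F₁ (s, t)) (F₁ (s₀, c) * deriv γ s₀ + 0) s₀ := by
    have heq : ∀ s, ∫ t in c..γ s, F₁ (s, t) =
        (∫ t in c..γ s, F₁ (s₀, t)) + ∫ t in c..γ s, (F₁ (s, t) - F₁ (s₀, t)) := by
      intro s
      rw [← intervalIntegral.integral_add (g := fun t => F₁ (s, t) - F₁ (s₀, t))
        ((slice_cont hF₁c s₀).intervalIntegrable _ _)
        (((slice_cont hF₁c s).sub (slice_cont hF₁c s₀)).intervalIntegrable _ _)]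
      simp
    rw [show (fun s => ∫ t in c..γ s, F₁ (s, t)) = fun s =>
        (∫ t in c..γ s, F₁ (s₀, t)) + ∫ t in c..γ s, (F₁ (s, t) - F₁ (s₀, t)) from funext heq]
    exact hKγ.add hR
  have hG : ∀ s, (∫ t in (0:ℝ)..γ s, F₁ (s, t)) =
      (∫ t in (0:ℝ)..c, F₁ (s, t)) + ∫ t in c..γ s, F₁ (s, t) := fun s =>
    (intervalIntegral.integral_add_adjacent_intervals
      ((slice_cont hF₁c s).intervalIntegrable _ _)
      ((slice_cont hF₁c s).intervalIntegrable _ _)).symm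
  have : HasDerivAt (fun s => (∫ t in (0:ℝ)..c, F₁ (s, t)) + ∫ t in c..γ s, F₁ (s, t)) _ s₀ :=
    hA.add hB
  simp only [hG]
  convert this using 1
  ring

end AuxDivergence

section MainDivergence
open Set Metric
set_option maxHeartbeats 1000000 in
/-- Green's (divergence) identity for a region `Q` below the graph of a positive `C¹`
function `γ` over `[a,b]`: the integral of the divergence of `(F₁, F₂)` over `Q` equals
the corresponding boundary integrals over the graph, the bottom edge, and the two
vertical sides. -/
theorem divergence_identity_graph_domain
    (a b : ℝ) (hab : a < b)
    (γ : ℝ → ℝ) (hγ : ContDiff ℝ 1 γ) (hγpos : ∀ s ∈ Set.Icc a b, 0 < γ s)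
    (F₁ F₂ : ℝ × ℝ → ℝ) (hF₁ : ContDiff ℝ 1 F₁) (hF₂ : ContDiff ℝ 1 F₂)
    (Q : Set (ℝ × ℝ))
    (hQ : Q = {p : ℝ × ℝ | a ≤ p.1 ∧ p.1 ≤ b ∧ 0 ≤ p.2 ∧ p.2 ≤ γ p.1}) :
    ∫ p in Q, (fderiv ℝ F₁ p (1, 0) + fderiv ℝ F₂ p (0, 1)) =
      (∫ s in a..b, (F₂ (s, γ s) - deriv γ s * F₁ (s, γ s))) -
        (∫ s in a..b, F₂ (s, 0)) +
        (∫ t in (0:ℝ)..(γ b), F₁ (b, t)) - ∫ t in (0:ℝ)..(γ a), F₁ (a, t) := by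
  set f : ℝ × ℝ → ℝ := fun p => fderiv ℝ F₁ p (1, 0) + fderiv ℝ F₂ p (0, 1) with hf
  have hfc : Continuous f :=
    ((hF₁.continuous_fderiv one_ne_zero).clm_apply continuous_const).add
      ((hF₂.continuous_fderiv one_ne_zero).clm_apply continuous_const)
  -- Q is compact and measurable
  have hQclosed : IsClosed Q := by
    rw [hQ]
    have : {p : ℝ × ℝ | a ≤ p.1 ∧ p.1 ≤ b ∧ 0 ≤ p.2 ∧ p.2 ≤ γ p.1} =
        {p : ℝ × ℝ | a ≤ p.1} ∩ ({p | p.1 ≤ b} ∩ ({p | 0 ≤ p.2} ∩ {p | p.2 ≤ γ p.1})) := by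
      ext p; simp only [Set.mem_setOf_eq, Set.mem_inter_iff]
    rw [this]
    exact (isClosed_le continuous_const continuous_fst).inter
      ((isClosed_le continuous_fst continuous_const).inter
        ((isClosed_le continuous_const continuous_snd).inter
          (isClosed_le continuous_snd (hγ.continuous.comp continuous_fst))))
  obtain ⟨M, hM⟩ := isCompact_Icc.exists_bound_of_continuousOn hγ.continuous.continuousOn (α := ℝ)
  have hQcompact : IsCompact Q := by
    refine IsCompact.of_isClosed_subset (isCompact_Icc (a := ((a, 0) : ℝ × ℝ)) (b := (b, M)))
      hQclosed ?_
    intro p hp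
    rw [hQ] at hp
    obtain ⟨h1, h2, h3, h4⟩ := hp
    refine ⟨⟨h1, h3⟩, ⟨h2, ?_⟩⟩
    calc p.2 ≤ γ p.1 := h4
      _ ≤ |γ p.1| := le_abs_self _
      _ ≤ M := by simpa [Real.norm_eq_abs] using hM p.1 ⟨h1, h2⟩
  have hQm : MeasurableSet Q := hQclosed.measurableSet
  have hInt : IntegrableOn f Q := hfc.continuousOn.integrableOn_compact hQcompact
  -- Fubini
  have hfub : ∫ p in Q, f p = ∫ s in a..b, (∫ t in (0:ℝ)..γ s, f (s, t)) := by
    rw [← MeasureTheory.integral_indicator hQm, MeasureTheory.Measure.volume_eq_prod ℝ ℝ,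
      MeasureTheory.integral_prod _ (by rwa [← MeasureTheory.Measure.volume_eq_prod ℝ ℝ, integrable_indicator_iff hQm]),
      intervalIntegral.integral_of_le hab.le, ← integral_Icc_eq_integral_Ioc,
      ← MeasureTheory.integral_indicator measurableSet_Icc]
    refine integral_congr_ae (Filter.Eventually.of_forall fun x => ?_)
    by_cases hx : x ∈ Set.Icc a b
    · rw [Set.indicator_of_mem hx]
      have h1 : ∀ y, Q.indicator f (x, y) = (Set.Icc 0 (γ x)).indicator (fun t => f (x, t)) y := by
        intro y
        simp only [hQ, Set.indicator_apply, Set.mem_setOf_eq, Set.mem_Icc]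
        rcases hx with ⟨hx1, hx2⟩
        simp [hx1, hx2]
      calc (∫ y, Q.indicator f (x, y)) =
          ∫ y, (Set.Icc 0 (γ x)).indicator (fun t => f (x, t)) y := by simp_rw [h1]
        _ = ∫ y in Set.Icc 0 (γ x), f (x, y) := MeasureTheory.integral_indicator measurableSet_Icc
        _ = ∫ t in (0:ℝ)..γ x, f (x, t) := by
            rw [intervalIntegral.integral_of_le (hγpos x hx).le, integral_Icc_eq_integral_Ioc]
    · rw [Set.indicator_of_notMem hx]
      have h1 : ∀ y, Q.indicator f (x, y) = 0 := by
        intro y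
        refine Set.indicator_of_notMem ?_ _
        rw [hQ]
        rintro ⟨h1, h2, -⟩
        exact hx ⟨h1, h2⟩
      simp only [h1, MeasureTheory.integral_zero]
  -- split inner integral, FTC in second variable
  have hi1 : ∀ s, IntervalIntegrable (fun t => fderiv ℝ F₁ (s, t) (1, 0)) volume 0 (γ s) :=
    fun s => ((cont_pderiv₁ hF₁).comp (continuous_const.prodMk continuous_id)).intervalIntegrable _ _
  have hi2 : ∀ s, IntervalIntegrable (fun t => fderiv ℝ F₂ (s, t) (0, 1)) volume 0 (γ s) :=
    fun s => (((hF₂.continuous_fderiv one_ne_zero).clm_apply continuous_const).comp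
      (continuous_const.prodMk continuous_id)).intervalIntegrable _ _
  have hinner : ∀ s, (∫ t in (0:ℝ)..γ s, f (s, t)) =
      (∫ t in (0:ℝ)..γ s, fderiv ℝ F₁ (s, t) (1, 0)) + (F₂ (s, γ s) - F₂ (s, 0)) := by
    intro s
    rw [hf]
    rw [intervalIntegral.integral_add (hi1 s) (hi2 s)]
    congr 1
    exact intervalIntegral.integral_eq_sub_of_hasDerivAt
      (fun t _ => hasDerivAt_slice₂ hF₂ s t) (hi2 s)
  -- continuity facts on [a,b]
  have c1 : Continuous fun s => deriv γ s * F₁ (s, γ s) :=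
    (hγ.continuous_deriv le_rfl).mul (hF₁.continuous.comp (continuous_id.prodMk hγ.continuous))
  have c2 : Continuous fun s => F₂ (s, γ s) :=
    hF₂.continuous.comp (continuous_id.prodMk hγ.continuous)
  have c3 : Continuous fun s => F₂ (s, 0) := slice_cont' hF₂.continuous 0
  have hco : Continuous fun s => ∫ t in (0:ℝ)..γ s, fderiv ℝ F₁ (s, t) (1, 0) := by
    have hcp : Continuous fun p : ℝ × ℝ => ∫ t in (0:ℝ)..p.2, fderiv ℝ F₁ (p.1, t) (1, 0) := by
      refine continuous_parametric_primitive_of_continuous (μ := volume)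
        (f := fun s t => fderiv ℝ F₁ (s, t) (1, 0)) (a₀ := 0) ?_
      show Continuous fun p : ℝ × ℝ => fderiv ℝ F₁ (p.1, p.2) (1, 0)
      simpa using cont_pderiv₁ hF₁
    have h2 : Continuous fun s : ℝ => ((s, γ s) : ℝ × ℝ) :=
      continuous_id.prodMk hγ.continuous
    have := hcp.comp h2
    exact this
  -- FTC in the first variable using the key lemma
  have hFTC1 : (∫ s in a..b, (deriv γ s * F₁ (s, γ s) +
        ∫ t in (0:ℝ)..γ s, fderiv ℝ F₁ (s, t) (1, 0))) =
      (∫ t in (0:ℝ)..γ b, F₁ (b, t)) - ∫ t in (0:ℝ)..γ a, F₁ (a, t) :=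
    intervalIntegral.integral_eq_sub_of_hasDerivAt
      (fun s _ => key_hasDerivAt γ hγ F₁ hF₁ s)
      ((c1.add hco).intervalIntegrable _ _)
  -- assemble
  rw [hfub]
  have e1 : (∫ s in a..b, (∫ t in (0:ℝ)..γ s, f (s, t))) =
      (∫ s in a..b, (∫ t in (0:ℝ)..γ s, fderiv ℝ F₁ (s, t) (1, 0))) +
        ∫ s in a..b, (F₂ (s, γ s) - F₂ (s, 0)) := by
    rw [← intervalIntegral.integral_add (g := fun s => F₂ (s, γ s) - F₂ (s, 0))
      (hco.intervalIntegrable _ _)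
      ((c2.sub c3).intervalIntegrable _ _)]
    exact intervalIntegral.integral_congr fun s _ => hinner s
  have e2 : (∫ s in a..b, (∫ t in (0:ℝ)..γ s, fderiv ℝ F₁ (s, t) (1, 0))) =
      ((∫ t in (0:ℝ)..γ b, F₁ (b, t)) - ∫ t in (0:ℝ)..γ a, F₁ (a, t)) -
        ∫ s in a..b, deriv γ s * F₁ (s, γ s) := by
    rw [← hFTC1, ← intervalIntegral.integral_sub
      (f := fun s => deriv γ s * F₁ (s, γ s) + ∫ t in (0:ℝ)..γ s, fderiv ℝ F₁ (s, t) (1, 0))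
      ((c1.add hco).intervalIntegrable _ _) (c1.intervalIntegrable _ _)]
    congr 1
    funext s
    ring
  have e3 : (∫ s in a..b, (F₂ (s, γ s) - F₂ (s, 0))) =
      (∫ s in a..b, F₂ (s, γ s)) - ∫ s in a..b, F₂ (s, 0) :=
    intervalIntegral.integral_sub (c2.intervalIntegrable _ _) (c3.intervalIntegrable _ _)
  have e4 : (∫ s in a..b, (F₂ (s, γ s) - deriv γ s * F₁ (s, γ s))) =
      (∫ s in a..b, F₂ (s, γ s)) - ∫ s in a..b, deriv γ s * F₁ (s, γ s) :=
    intervalIntegral.integral_sub (c2.intervalIntegrable _ _) (c1.intervalIntegrable _ _)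
  rw [e1, e2, e3, e4]
  ring

end MainDivergence
end
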